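/- arXiv:1812.01456 — 5 statements merged into one kernel-verified Lean document; each statement's English description precedes it below -/
import Mathlib

section
/- Let α ≠ β be complex numbers and n ≥ 1. Then every multiple root μ of the polynomial (λ-α)·((λ-α)^n - (λ-β)^n) cannot exist; that is, this polynomial of degree n+1 has only simple roots. -/
open Polynomial

theorem stmt_2 (n : ℕ) (hn : 1 ≤ n) (α β : ℂ) (hab : α ≠ β) (μ : ℂ) :
    ¬ (((X - C α) * ((X - C α) ^ n - (X - C β) ^ n) : Polynomial ℂ).IsRoot μ ∧
        (derivative ((X - C α) * ((X - C α) ^ n - (X - C β) ^ n) : Polynomial ℂ)).IsRoot μ) := by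
  rintro ⟨h1, h2⟩
  simp only [IsRoot, derivative_mul, derivative_sub, derivative_pow, derivative_X, derivative_C, sub_zero,
    eval_mul, eval_sub, eval_add, eval_pow, eval_X, eval_C, eval_one, eval_natCast,
    mul_one, one_mul] at h1 h2
  set a := μ - α with ha
  set b := μ - β with hb
  have hab' : a ≠ b := by
    intro h
    exact hab (by linear_combination -h)
  rcases eq_or_ne a 0 with h0 | h0
  · -- μ = α
    rw [h0] at h2
    simp only [zero_mul, zero_pow (show n ≠ 0 by omega), zero_sub, mul_zero, add_zero] at h2
    have hb0 : b ≠ 0 := by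
      intro hb0; apply hab'; rw [h0, hb0]
    exact pow_ne_zero n hb0 (neg_eq_zero.mp h2)
  · have hg : a ^ n - b ^ n = 0 := by
      rcases mul_eq_zero.mp h1 with h | h
      · exact absurd h h0
      · exact h
    rw [hg] at h2
    rw [zero_add] at h2
    have hgd : (n : ℂ) * a ^ (n - 1) - (n : ℂ) * b ^ (n - 1) = 0 := by
      rcases mul_eq_zero.mp h2 with h | h
      · exact absurd h h0
      · exact h
    have hn0 : (n : ℂ) ≠ 0 := Nat.cast_ne_zero.mpr (by omega)
    have hd : a ^ (n - 1) = b ^ (n - 1) := by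
      have := sub_eq_zero.mp hgd
      exact mul_left_cancel₀ hn0 this
    have he : a ^ n = b ^ n := sub_eq_zero.mp hg
    have hb0 : b ≠ 0 := by
      intro hb0
      rw [hb0, zero_pow (by omega)] at he
      exact h0 (pow_eq_zero_iff (by omega) |>.mp he)
    apply hab'
    have key : a * b ^ (n - 1) = b * b ^ (n - 1) := by
      calc a * b ^ (n - 1) = a * a ^ (n - 1) := by rw [hd]
        _ = a ^ n := by rw [← pow_succ']; congr 1; omega
        _ = b ^ n := he
        _ = b * b ^ (n - 1) := by rw [← pow_succ']; congr 1; omega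
    exact mul_right_cancel₀ (pow_ne_zero _ hb0) key
end

section
/- Let N be an n×n complex matrix with N* = -N (adjoint with respect to the signature-(p,q) form defined by s = diag(-I_p, I_q), i.e., N* = s N̄ᵗ s), N² = 0, and rank N = 2. Then there exist matrices N₁, N₂ with Nᵢ* = -Nᵢ, Nᵢ² = 0, rank Nᵢ = 1, N₁N₂ = N₂N₁ = 0, and N = N₁ + N₂. -/
open Matrix

/-- The matrix `s = diag(-I_p, I_q)` defining the signature-`(p,q)` Hermitian form on `ℂⁿ`. -/
noncomputable def sig (p n : ℕ) : Matrix (Fin n) (Fin n) ℂ :=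
  Matrix.diagonal fun i => if (i : ℕ) < p then -1 else 1

/-- The Hermitian form `⟨v,w⟩ = -∑_{i<p} v̄ᵢwᵢ + ∑_{i≥p} v̄ᵢwᵢ = v̄ᵗ s w`. -/
noncomputable def pqform (p n : ℕ) (v w : Fin n → ℂ) : ℂ :=
  star v ⬝ᵥ (sig p n *ᵥ w)

/-- The adjoint `A* = s Āᵗ s` with respect to the signature-`(p,q)` form. -/
noncomputable def pqadj (p n : ℕ) (A : Matrix (Fin n) (Fin n) ℂ) : Matrix (Fin n) (Fin n) ℂ :=
  sig p n * Aᴴ * sig p n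

lemma sig_mul_self (p n : ℕ) : sig p n * sig p n = 1 := by
  rw [sig, diagonal_mul_diagonal]
  have h : (fun i : Fin n => (if (i : ℕ) < p then (-1 : ℂ) else 1) *
      (if (i : ℕ) < p then (-1 : ℂ) else 1)) = fun _ => 1 := by
    funext i
    split_ifs <;> ring
  rw [h, diagonal_one]

lemma sig_conjTranspose (p n : ℕ) : (sig p n)ᴴ = sig p n := by
  rw [sig, diagonal_conjTranspose]
  have h : star (fun i : Fin n => if (i : ℕ) < p then (-1 : ℂ) else 1) =
      fun i : Fin n => if (i : ℕ) < p then (-1 : ℂ) else 1 := by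
    funext i
    simp only [Pi.star_apply]
    split_ifs <;> simp
  rw [h]

lemma conj_cancel {n : ℕ} (U A : Matrix (Fin n) (Fin n) ℂ) (hU1 : Uᴴ * U = 1) :
    Uᴴ * (U * A * Uᴴ) * U = A := by
  calc Uᴴ * (U * A * Uᴴ) * U = (Uᴴ * U) * A * (Uᴴ * U) := by
        simp only [Matrix.mul_assoc]
    _ = A := by rw [hU1, Matrix.one_mul, Matrix.mul_one]

theorem stmt_7 (p q n : ℕ) (hn : n = p + q) (N : Matrix (Fin n) (Fin n) ℂ)
    (hadj : pqadj p n N = -N) (hnil : N * N = 0) (hrk : N.rank = 2) :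
    ∃ N₁ N₂ : Matrix (Fin n) (Fin n) ℂ,
      pqadj p n N₁ = -N₁ ∧ pqadj p n N₂ = -N₂ ∧
      N₁ * N₁ = 0 ∧ N₂ * N₂ = 0 ∧
      N₁.rank = 1 ∧ N₂.rank = 1 ∧
      N₁ * N₂ = 0 ∧ N₂ * N₁ = 0 ∧
      N = N₁ + N₂ := by
  set s : Matrix (Fin n) (Fin n) ℂ := sig p n with hsdef
  have hss : s * s = 1 := sig_mul_self p n
  have hsH : sᴴ = s := sig_conjTranspose p n
  have hsdet : IsUnit s.det := by
    apply IsUnit.of_mul_eq_one s.det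
    rw [← det_mul, hss, det_one]
  set M : Matrix (Fin n) (Fin n) ℂ := s * N with hMdef
  have hNM : N = s * M := by rw [hMdef, ← Matrix.mul_assoc, hss, Matrix.one_mul]
  have hMskew : Mᴴ = -M := by
    have h : s * Nᴴ * s = -N := hadj
    calc Mᴴ = Nᴴ * s := by rw [hMdef, conjTranspose_mul, hsH]
      _ = s * (s * Nᴴ * s) := by
          rw [← Matrix.mul_assoc, ← Matrix.mul_assoc, hss, Matrix.one_mul]
      _ = s * (-N) := by rw [h]
      _ = -M := by rw [Matrix.mul_neg, hMdef]
  have hH : (Complex.I • M).IsHermitian := by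
    unfold Matrix.IsHermitian
    rw [conjTranspose_smul, hMskew]
    simp [Complex.star_def, Complex.conj_I]
  set U : Matrix (Fin n) (Fin n) ℂ := (hH.eigenvectorUnitary : Matrix (Fin n) (Fin n) ℂ)
    with hUdef
  have hU1 : Uᴴ * U = 1 := by
    rw [← Matrix.star_eq_conjTranspose]
    exact mem_unitaryGroup_iff'.mp hH.eigenvectorUnitary.2
  have hU2 : U * Uᴴ = 1 := by
    rw [← Matrix.star_eq_conjTranspose]
    exact mem_unitaryGroup_iff.mp hH.eigenvectorUnitary.2
  have hUdet : IsUnit U.det := by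
    apply IsUnit.of_mul_eq_one Uᴴ.det
    rw [← det_mul, hU2, det_one]
  have hUHdet : IsUnit Uᴴ.det := by
    apply IsUnit.of_mul_eq_one U.det
    rw [← det_mul, hU1, det_one]
  set d : Fin n → ℂ := fun i => -Complex.I * (hH.eigenvalues i : ℂ) with hddef
  have hMdiag : M = U * diagonal d * Uᴴ := by
    have hspec : Complex.I • M =
        U * diagonal (RCLike.ofReal ∘ hH.eigenvalues) * (star U) := hH.spectral_theorem
    have h2 : M = (-Complex.I) • (U * diagonal (RCLike.ofReal ∘ hH.eigenvalues) * (star U)) := by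
      rw [← hspec, smul_smul, neg_mul, Complex.I_mul_I, neg_neg, one_smul]
    have hd' : diagonal d = (-Complex.I) • diagonal (RCLike.ofReal ∘ hH.eigenvalues) := by
      rw [← diagonal_smul]
      have he : d = (-Complex.I) • ((RCLike.ofReal ∘ hH.eigenvalues : Fin n → ℂ)) := by
        funext i
        simp [hddef, Function.comp, smul_eq_mul]
      rw [he]
    rw [h2, Matrix.star_eq_conjTranspose, hd']
    simp only [mul_smul_comm, smul_mul_assoc]
  have hstar_d : ∀ i, star (d i) = -(d i) := by
    intro i
    have hdi : d i = -Complex.I * (hH.eigenvalues i : ℂ) := rfl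
    rw [hdi, star_mul', star_neg, Complex.star_def, Complex.conj_I, Complex.conj_ofReal]
    ring
  -- the Gram matrix of s in the eigenbasis
  set V : Matrix (Fin n) (Fin n) ℂ := Uᴴ * s * U with hVdef
  -- M s M = 0
  have hMsM : M * s * M = 0 := by
    have h1 : s * (M * s * M) = 0 := by
      have : N * N = s * (M * s * M) := by
        rw [hNM]; simp only [Matrix.mul_assoc]
      rw [← this, hnil]
    calc M * s * M = (s * s) * (M * s * M) := by rw [hss, Matrix.one_mul]
      _ = s * (s * (M * s * M)) := by rw [Matrix.mul_assoc]
      _ = s * 0 := by rw [h1]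
      _ = 0 := by rw [Matrix.mul_zero]
  have hDVD : diagonal d * V * diagonal d = 0 := by
    have key : U * (diagonal d * V * diagonal d) * Uᴴ = M * s * M := by
      rw [hMdiag, hVdef]; simp only [Matrix.mul_assoc]
    have h3 := conj_cancel U (diagonal d * V * diagonal d) hU1
    rw [key, hMsM] at h3
    rw [← h3]; simp
  have hV0 : ∀ i j, d i ≠ 0 → d j ≠ 0 → V i j = 0 := by
    intro i j hi hj
    have h := Matrix.ext_iff.mpr hDVD i j
    rw [mul_diagonal, diagonal_mul, Matrix.zero_apply] at h
    rcases mul_eq_zero.mp h with h'' | h''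
    · rcases mul_eq_zero.mp h'' with h3 | h3
      · exact absurd h3 hi
      · exact h3
    · exact absurd h'' hj
  -- generic rank formula
  have hrankgen : ∀ e : Fin n → ℂ,
      (s * (U * diagonal e * Uᴴ)).rank = Fintype.card {i // e i ≠ 0} := by
    intro e
    rw [rank_mul_eq_right_of_isUnit_det s _ hsdet,
      rank_mul_eq_left_of_isUnit_det Uᴴ (U * diagonal e) hUHdet,
      rank_mul_eq_right_of_isUnit_det U (diagonal e) hUdet,
      Matrix.rank_diagonal]
  -- generic adjoint formula
  have hadjgen : ∀ e : Fin n → ℂ, (∀ i, star (e i) = -(e i)) →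
      pqadj p n (s * (U * diagonal e * Uᴴ)) = -(s * (U * diagonal e * Uᴴ)) := by
    intro e hstar
    have hse : star e = fun i => -(e i) := funext fun i => hstar i
    have hYH : (U * diagonal e * Uᴴ)ᴴ = -(U * diagonal e * Uᴴ) := by
      rw [conjTranspose_mul, conjTranspose_mul, conjTranspose_conjTranspose,
        diagonal_conjTranspose, hse, ← diagonal_neg]
      simp only [Matrix.mul_neg, Matrix.neg_mul, Matrix.mul_assoc]
    show s * (s * (U * diagonal e * Uᴴ))ᴴ * s = _
    rw [conjTranspose_mul, hsH, hYH]
    calc s * (-(U * diagonal e * Uᴴ) * s) * s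
        = -(s * (U * (diagonal e * (Uᴴ * (s * s))))) := by
          simp only [Matrix.mul_neg, Matrix.neg_mul, Matrix.mul_assoc]
      _ = -(s * (U * diagonal e * Uᴴ)) := by
          rw [hss, Matrix.mul_one]
          simp only [Matrix.mul_assoc]
  -- generic product-vanishing formula
  have hmulgen : ∀ e f : Fin n → ℂ, (∀ i, e i ≠ 0 → d i ≠ 0) → (∀ i, f i ≠ 0 → d i ≠ 0) →
      (s * (U * diagonal e * Uᴴ)) * (s * (U * diagonal f * Uᴴ)) = 0 := by
    intro e f he hf
    have hz : diagonal e * V * diagonal f = 0 := by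
      ext i j
      rw [mul_diagonal, diagonal_mul, Matrix.zero_apply]
      by_cases hei : e i = 0
      · rw [hei]; ring
      · by_cases hfj : f j = 0
        · rw [hfj]; ring
        · rw [hV0 i j (he i hei) (hf j hfj)]; ring
    have key : (s * (U * diagonal e * Uᴴ)) * (s * (U * diagonal f * Uᴴ)) =
        s * (U * (diagonal e * V * diagonal f) * Uᴴ) := by
      rw [hVdef]; simp only [Matrix.mul_assoc]
    rw [key, hz]
    simp
  -- rank of diagonal d is 2; extract the two indices
  have hrankd : Fintype.card {i // d i ≠ 0} = 2 := by
    have h1 : (s * (U * diagonal d * Uᴴ)).rank = 2 := by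
      rw [← hMdiag, ← hNM]; exact hrk
    rw [hrankgen d] at h1
    exact h1
  have hcard2 : ∃ x y : {i // d i ≠ 0}, x ≠ y ∧ ({x, y} : Set {i // d i ≠ 0}) = Set.univ := by
    rw [← Nat.card_eq_two_iff, Nat.card_eq_fintype_card]
    exact hrankd
  obtain ⟨x, y, hxy, hcov⟩ := hcard2
  have hd1 : d x.1 ≠ 0 := x.2
  have hd2 : d y.1 ≠ 0 := y.2
  have hne : x.1 ≠ y.1 := fun h => hxy (Subtype.ext h)
  have hcover : ∀ i, d i ≠ 0 → i = x.1 ∨ i = y.1 := by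
    intro i hi
    have hmem : (⟨i, hi⟩ : {i // d i ≠ 0}) ∈ ({x, y} : Set {i // d i ≠ 0}) := by
      rw [hcov]; trivial
    rcases hmem with h | h
    · left; exact congrArg Subtype.val h
    · right; exact congrArg Subtype.val h
  set e₁ : Fin n → ℂ := fun i => if i = x.1 then d i else 0 with he1def
  set e₂ : Fin n → ℂ := fun i => if i = y.1 then d i else 0 with he2def
  have hne1 : ∀ i, e₁ i ≠ 0 → d i ≠ 0 := by
    intro i hi
    by_contra h
    apply hi
    simp only [he1def, h, if_neg, ite_self]
  have hne2 : ∀ i, e₂ i ≠ 0 → d i ≠ 0 := by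
    intro i hi
    by_contra h
    apply hi
    simp only [he2def, h, if_neg, ite_self]
  have hstar1 : ∀ i, star (e₁ i) = -(e₁ i) := by
    intro i; simp only [he1def]; split_ifs
    · exact hstar_d i
    · simp
  have hstar2 : ∀ i, star (e₂ i) = -(e₂ i) := by
    intro i; simp only [he2def]; split_ifs
    · exact hstar_d i
    · simp
  have hcard1 : Fintype.card {i // e₁ i ≠ 0} = 1 := by
    rw [Fintype.card_eq_one_iff]
    refine ⟨⟨x.1, by simp only [he1def, if_pos rfl]; exact hd1⟩, ?_⟩
    rintro ⟨i, hi⟩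
    apply Subtype.ext
    show i = x.1
    by_contra h
    apply hi
    simp only [he1def, if_neg h]
  have hcard1' : Fintype.card {i // e₂ i ≠ 0} = 1 := by
    rw [Fintype.card_eq_one_iff]
    refine ⟨⟨y.1, by simp only [he2def, if_pos rfl]; exact hd2⟩, ?_⟩
    rintro ⟨i, hi⟩
    apply Subtype.ext
    show i = y.1
    by_contra h
    apply hi
    simp only [he2def, if_neg h]
  have hsum : e₁ + e₂ = d := by
    funext i
    simp only [Pi.add_apply, he1def, he2def]
    by_cases h1 : i = x.1
    · subst h1
      rw [if_pos rfl, if_neg (by exact hne)]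
      ring
    · by_cases h2 : i = y.1
      · subst h2
        rw [if_neg h1, if_pos rfl]
        ring
      · rw [if_neg h1, if_neg h2]
        by_cases hd : d i = 0
        · rw [hd]; ring
        · rcases hcover i hd with h | h
          · exact absurd h h1
          · exact absurd h h2
  refine ⟨s * (U * diagonal e₁ * Uᴴ), s * (U * diagonal e₂ * Uᴴ),
    hadjgen e₁ hstar1, hadjgen e₂ hstar2,
    hmulgen e₁ e₁ hne1 hne1, hmulgen e₂ e₂ hne2 hne2,
    by rw [hrankgen e₁]; exact hcard1,
    by rw [hrankgen e₂]; exact hcard1',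
    hmulgen e₁ e₂ hne1 hne2, hmulgen e₂ e₁ hne2 hne1, ?_⟩
  have hsum' : d = fun i => e₁ i + e₂ i := by
    funext i
    exact (congrFun hsum i).symm
  rw [hNM, hMdiag, hsum', ← diagonal_add]
  simp only [Matrix.mul_add, Matrix.add_mul]
end

section
/- With L, K, θ as above (L = (L₁;L₂) with unit vectors L₁,L₂, K = (L₁; e^{iθ}L₂), e^{iθ} ≠ ±1), and π = L K̄ᵗ s/(K̄ᵗ s L), π̃ = L L̄ᵗ/(L̄ᵗ L), π̃* = s π̃̄ᵗ s = sL L̄ᵗ s/(L̄ᵗL), one has π · π̃* = ((1+e^{iθ})/(2(1-e^{iθ}))) · L L̄ᵗ s, and this matrix N satisfies N² = 0 and N* = -N. -/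
open Matrix

section helpers
variable {n : ℕ}

lemma vmv_mul_vmv (a b c d : Fin n → ℂ) :
    vecMulVec a b * vecMulVec c d = (b ⬝ᵥ c) • vecMulVec a d := by
  ext i j
  simp [Matrix.mul_apply, vecMulVec_apply, dotProduct, Finset.mul_sum, Finset.sum_mul]
  congr 1; ext k; ring

lemma vmv_mul_diag (a b d : Fin n → ℂ) :
    vecMulVec a b * Matrix.diagonal d = vecMulVec a (fun j => b j * d j) := by
  ext i j
  simp [Matrix.mul_diagonal, vecMulVec_apply, mul_assoc]

lemma diag_mul_vmv (a b d : Fin n → ℂ) :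
    Matrix.diagonal d * vecMulVec a b = vecMulVec (fun i => d i * a i) b := by
  ext i j
  simp [Matrix.diagonal_mul, vecMulVec_apply, mul_assoc]

lemma vmv_conjT (a b : Fin n → ℂ) :
    (vecMulVec a b)ᴴ = vecMulVec (star b) (star a) := by
  ext i j
  simp [Matrix.conjTranspose_apply, vecMulVec_apply, mul_comm]

lemma sig_mul_sig (p : ℕ) : sig p n * sig p n = 1 := by
  simp only [sig, Matrix.diagonal_mul_diagonal]
  have h : (fun i : Fin n => (if (i:ℕ)<p then (-1:ℂ) else 1) * if (i:ℕ)<p then -1 else 1) = fun _ => 1 := by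
    ext i; split <;> simp
  rw [h, Matrix.diagonal_one]

lemma sig_conjT (p : ℕ) : (sig p n)ᴴ = sig p n := by
  rw [sig, Matrix.diagonal_conjTranspose]
  have h : star (fun i : Fin n => if (i:ℕ)<p then (-1:ℂ) else 1)
      = fun i : Fin n => if (i:ℕ)<p then (-1:ℂ) else 1 := by
    ext i; by_cases h : (i:ℕ)<p <;> simp [h]
  rw [h]
end helpers

theorem stmt_11 (p q n : ℕ) (hn : n = p + q) (θ : ℝ)
    (hθ1 : Complex.exp ((θ : ℂ) * Complex.I) ≠ 1)
    (hθ2 : Complex.exp ((θ : ℂ) * Complex.I) ≠ -1)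
    (L : Fin n → ℂ)
    (hL1 : ∑ i : Fin n, (if (i : ℕ) < p then ‖L i‖ ^ 2 else 0) = 1)
    (hL2 : ∑ i : Fin n, (if (i : ℕ) < p then 0 else ‖L i‖ ^ 2) = 1)
    (K : Fin n → ℂ)
    (hK : K = fun i : Fin n => if (i : ℕ) < p then L i else Complex.exp ((θ : ℂ) * Complex.I) * L i)
    (π πt N : Matrix (Fin n) (Fin n) ℂ)
    (hπ : π = (pqform p n K L)⁻¹ • (Matrix.vecMulVec L (star K) * sig p n))
    (hπt : πt = (star L ⬝ᵥ L)⁻¹ • Matrix.vecMulVec L (star L))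
    (hN : N = ((1 + Complex.exp ((θ : ℂ) * Complex.I)) /
        (2 * (1 - Complex.exp ((θ : ℂ) * Complex.I)))) •
      (Matrix.vecMulVec L (star L) * sig p n)) :
    π * pqadj p n πt = N ∧ N * N = 0 ∧ pqadj p n N = -N := by
  set e := Complex.exp ((θ : ℂ) * Complex.I) with he_def
  have he0 : e ≠ 0 := Complex.exp_ne_zero _
  have hce : (starRingEnd ℂ) e = e⁻¹ := by
    rw [he_def, ← Complex.exp_conj, ← Complex.exp_neg]
    congr 1
    simp [Complex.conj_I]
  -- the diagonal of sig as a vector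
  set d : Fin n → ℂ := fun i => if (i : ℕ) < p then -1 else 1 with hd_def
  have hsig : sig p n = Matrix.diagonal d := rfl
  have hdd : ∀ j, d j * d j = 1 := by
    intro j; by_cases h : (j : ℕ) < p <;> simp [hd_def, h]
  -- scalar sums
  have hterm : ∀ i : Fin n, (starRingEnd ℂ) (L i) * L i = ((‖L i‖ ^ 2 : ℝ) : ℂ) := by
    intro i
    rw [Complex.conj_mul']
    norm_cast
  have hA : ∑ i : Fin n, (if (i : ℕ) < p then (starRingEnd ℂ) (L i) * L i else 0) = 1 := by
    have : ∀ i : Fin n, (if (i : ℕ) < p then (starRingEnd ℂ) (L i) * L i else 0)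
        = (((if (i : ℕ) < p then ‖L i‖ ^ 2 else 0 : ℝ)) : ℂ) := by
      intro i; split <;> simp [hterm]
    rw [Finset.sum_congr rfl fun i _ => this i, ← Complex.ofReal_sum, hL1, Complex.ofReal_one]
  have hB : ∑ i : Fin n, (if (i : ℕ) < p then 0 else (starRingEnd ℂ) (L i) * L i) = 1 := by
    have : ∀ i : Fin n, (if (i : ℕ) < p then 0 else (starRingEnd ℂ) (L i) * L i)
        = (((if (i : ℕ) < p then 0 else ‖L i‖ ^ 2 : ℝ)) : ℂ) := by
      intro i; split <;> simp [hterm]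
    rw [Finset.sum_congr rfl fun i _ => this i, ← Complex.ofReal_sum, hL2, Complex.ofReal_one]
  -- dot products
  have hKL : star K ⬝ᵥ L = 1 + e⁻¹ := by
    have : ∀ i : Fin n, star K i * L i =
        (if (i : ℕ) < p then (starRingEnd ℂ) (L i) * L i else 0)
        + e⁻¹ * (if (i : ℕ) < p then 0 else (starRingEnd ℂ) (L i) * L i) := by
      intro i
      simp only [hK, Pi.star_apply]
      by_cases h : (i : ℕ) < p
      · simp [h, RCLike.star_def]
      · simp [h, RCLike.star_def, _root_.map_mul, hce]; ring
    rw [dotProduct, Finset.sum_congr rfl fun i _ => this i, Finset.sum_add_distrib,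
      ← Finset.mul_sum, hA, hB, mul_one]
  have hform : pqform p n K L = -1 + e⁻¹ := by
    have hmv : sig p n *ᵥ L = fun i => d i * L i := by
      rw [hsig]; ext i; simp [Matrix.mulVec_diagonal]
    have : ∀ i : Fin n, star K i * (d i * L i) =
        -(if (i : ℕ) < p then (starRingEnd ℂ) (L i) * L i else 0)
        + e⁻¹ * (if (i : ℕ) < p then 0 else (starRingEnd ℂ) (L i) * L i) := by
      intro i
      simp only [hK, hd_def, Pi.star_apply]
      by_cases h : (i : ℕ) < p
      · simp [h, RCLike.star_def]
      · simp [h, RCLike.star_def, _root_.map_mul, hce]; ring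
    rw [pqform, hmv, dotProduct, Finset.sum_congr rfl fun i _ => this i,
      Finset.sum_add_distrib, Finset.sum_neg_distrib, ← Finset.mul_sum, hA, hB, mul_one]
  have hLL : star L ⬝ᵥ L = 2 := by
    have : ∀ i : Fin n, star L i * L i =
        (if (i : ℕ) < p then (starRingEnd ℂ) (L i) * L i else 0)
        + (if (i : ℕ) < p then 0 else (starRingEnd ℂ) (L i) * L i) := by
      intro i
      simp only [Pi.star_apply, RCLike.star_def]
      by_cases h : (i : ℕ) < p <;> simp [h]
    rw [dotProduct, Finset.sum_congr rfl fun i _ => this i, Finset.sum_add_distrib, hA, hB]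
    norm_num
  -- nonvanishing facts
  have h1e : (1 : ℂ) - e ≠ 0 := fun h => hθ1 (by linear_combination -h)
  have hinv1 : e⁻¹ ≠ 1 := by
    rw [Ne, inv_eq_one]; exact hθ1
  have hform0 : (-1 : ℂ) + e⁻¹ ≠ 0 := by
    intro h; exact hinv1 (by linear_combination h)
  -- name the rank-one pieces
  have hw : (fun j => star L j * d j) ⬝ᵥ L = 0 := by
    have : ∀ i : Fin n, star L i * d i * L i =
        -(if (i : ℕ) < p then (starRingEnd ℂ) (L i) * L i else 0)
        + (if (i : ℕ) < p then 0 else (starRingEnd ℂ) (L i) * L i) := by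
      intro i
      simp only [Pi.star_apply, RCLike.star_def, hd_def]
      by_cases h : (i : ℕ) < p <;> simp [h] <;> ring
    rw [dotProduct, Finset.sum_congr rfl fun i _ => this i, Finset.sum_add_distrib,
      Finset.sum_neg_distrib, hA, hB]
    ring
  have hM : Matrix.vecMulVec L (star L) * sig p n = Matrix.vecMulVec L (fun j => star L j * d j) := by
    rw [hsig, vmv_mul_diag]
  -- part 1
  have hadjπt : pqadj p n πt =
      (2 : ℂ)⁻¹ • Matrix.vecMulVec (fun i => d i * L i) (fun j => star L j * d j) := by
    rw [pqadj, hπt, Matrix.conjTranspose_smul, vmv_conjT, star_star, hLL]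
    have hstar : star ((2 : ℂ)⁻¹) = (2 : ℂ)⁻¹ := by simp
    rw [hstar, Matrix.mul_smul, Matrix.smul_mul, hsig, diag_mul_vmv, vmv_mul_diag]
  have part1 : π * pqadj p n πt = N := by
    rw [hπ, hadjπt, hform, hN, hM, hsig, vmv_mul_diag, Matrix.smul_mul, Matrix.mul_smul,
      vmv_mul_vmv]
    have hdot : (fun j => star K j * d j) ⬝ᵥ (fun i => d i * L i) = 1 + e⁻¹ := by
      rw [← hKL]
      apply Finset.sum_congr rfl
      intro i _
      simp only [Pi.star_apply, RCLike.star_def]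
      linear_combination ((starRingEnd ℂ) (K i) * L i) * hdd i
    rw [hdot]
    simp only [smul_smul]
    congr 1
    have h1e' : -e + 1 ≠ 0 := fun h => h1e (by linear_combination h)
    field_simp [he0, h1e', hform0]
    ring
  refine ⟨part1, ?_, ?_⟩
  · rw [hN, hM, smul_mul_smul_comm, vmv_mul_vmv, hw, zero_smul, smul_zero]
  · rw [hN, pqadj, Matrix.conjTranspose_smul, Matrix.conjTranspose_mul, sig_conjT,
      vmv_conjT, star_star, Matrix.mul_smul, Matrix.smul_mul]
    have hmm : sig p n * (sig p n * vecMulVec L (star L)) * sig p n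
        = vecMulVec L (star L) * sig p n := by
      rw [← Matrix.mul_assoc, sig_mul_sig, Matrix.one_mul]
    rw [hmm]
    have h1ei : (1 : ℂ) - e⁻¹ ≠ 0 := by
      intro h; exact hinv1 (by linear_combination -h)
    have hc : star ((1 + e) / (2 * (1 - e))) = -((1 + e) / (2 * (1 - e))) := by
      rw [RCLike.star_def, map_div₀, _root_.map_mul, map_add, map_sub, _root_.map_one,
        _root_.map_ofNat, hce, ← neg_div, div_eq_div_iff (mul_ne_zero two_ne_zero h1ei)
          (mul_ne_zero two_ne_zero h1e)]
      field_simp [he0]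
      ring
    rw [hc, neg_smul]
end

section
/- Let π be a matrix with π² = π, π π* = π* π = 0 (adjoint with respect to s = diag(-I_p,I_q)), and let π̃ satisfy π̃² = π̃, π π̃ = π̃, π̃ π = π, π* π̃ = 0. Set N := π - π̃ and suppose N π̃* = N and N π = 0 hold (as follow when π, π̃ are the projections of the basic construction). Then for α ∈ ℝ and β ∈ ℂ, (I + ((α-β)/(λ-α))π + ((β̄-α)/(λ-β̄))π*) · (I + ((β-α)/(λ-β))π̃ + ((α-β̄)/(λ-α))π̃*) = I + ((2α-β-β̄)/(λ-α))N + (|α-β|²/(λ-α)²)N, provided π - π̃ = π π̃* = N and π̃* - π* = -N*= N. -/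
open Matrix

theorem stmt_12 (p q n : ℕ) (hn : n = p + q)
    (π πt N : Matrix (Fin n) (Fin n) ℂ)
    (hπ2 : π * π = π)
    (hππs : π * pqadj p n π = 0) (hπsπ : pqadj p n π * π = 0)
    (hπt2 : πt * πt = πt)
    (hππt : π * πt = πt) (hπtπ : πt * π = π)
    (hπsπt : pqadj p n π * πt = 0)
    (hNdef : N = π - πt)
    (hNπts : N * pqadj p n πt = N) (hNπ : N * π = 0)
    (hππts : π * pqadj p n πt = N)
    (hstar : pqadj p n πt - pqadj p n π = N)
    (hNas : pqadj p n N = -N)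
    (α : ℝ) (β lam : ℂ)
    (h1 : lam ≠ (α : ℂ)) (h2 : lam ≠ β) (h3 : lam ≠ (starRingEnd ℂ) β) :
    (1 + (((α : ℂ) - β) / (lam - (α : ℂ))) • π +
        (((starRingEnd ℂ) β - (α : ℂ)) / (lam - (starRingEnd ℂ) β)) • pqadj p n π) *
      (1 + ((β - (α : ℂ)) / (lam - β)) • πt +
        (((α : ℂ) - (starRingEnd ℂ) β) / (lam - (α : ℂ))) • pqadj p n πt) =
      1 + ((2 * (α : ℂ) - β - (starRingEnd ℂ) β) / (lam - (α : ℂ))) • N +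
        (((Complex.normSq ((α : ℂ) - β) : ℝ) : ℂ) / (lam - (α : ℂ)) ^ 2) • N := by

  set A := pqadj p n π with hA
  -- basic product facts
  have hπA : π * A = 0 := hππs
  have hAπ : A * π = 0 := hπsπ
  have hπN : π * N = N := by rw [hNdef, mul_sub, hπ2, hππt]
  have hAN : A * N = 0 := by rw [hNdef, mul_sub, hπsπ, hπsπt, sub_zero]
  have hA2 : A * A = A := by
    have hss : sig p n * sig p n = 1 := by
      simp [sig, Matrix.diagonal_mul_diagonal]
      ext i
      by_cases h2 : (i : ℕ) < p <;> simp [h2]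
    have : A * A = sig p n * (π * π)ᴴ * sig p n := by
      rw [hA]
      simp only [pqadj, Matrix.conjTranspose_mul]
      rw [show sig p n * πᴴ * sig p n * (sig p n * πᴴ * sig p n)
            = sig p n * (πᴴ * (sig p n * sig p n) * πᴴ) * sig p n by
          noncomm_ring]
      rw [hss]
      noncomm_ring
    rw [this, hπ2]
    rfl
  have hB : pqadj p n πt = A + N := by
    rw [← hstar]; abel
  have hπt : πt = π - N := by rw [hNdef]; abel
  -- scalar abbreviations
  set a : ℂ := (α : ℂ)
  have d1 : lam - a ≠ 0 := sub_ne_zero.mpr h1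
  have d2 : lam - β ≠ 0 := sub_ne_zero.mpr h2
  have d3 : lam - (starRingEnd ℂ) β ≠ 0 := sub_ne_zero.mpr h3
  have hnorm : ((Complex.normSq (a - β) : ℝ) : ℂ)
      = (a - β) * (a - (starRingEnd ℂ) β) := by
    rw [← Complex.mul_conj]
    simp [a, map_sub, Complex.conj_ofReal]
  rw [hnorm, hB, hπt]
  -- expand everything
  simp only [mul_add, add_mul, one_mul, mul_one, smul_mul_assoc, mul_smul_comm,
    smul_smul, mul_sub, sub_mul, smul_sub, hπ2, hπA, hAπ, hπN, hAN, hA2,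
    smul_zero, sub_zero, zero_sub, add_zero]
  match_scalars <;> field_simp <;> ring
end

section
/- Let p ≠ q, and on ℂⁿ (n = p+q) take the signature-(p,q) Hermitian form with s = diag(-I_p, I_q). Let V be a maximal isotropic subspace, w ∈ V, v ∈ V^⊥ \ V, u ∉ V^⊥ with ⟨u,w⟩ ∈ ℝ \ {0} and 2⟨u,w⟩ + ⟨v,v⟩ = 0. Then there exists a rank-1 linear map M : (V⊕sV)^⊥ → V (extended by zero on V⊕sV) such that N = M - M* satisfies (1/2)N²(u) + N(v) + w = 0. -/
open Matrix

/-- The diagonal of `sig` as a function. -/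
noncomputable def dfun (p n : ℕ) : Fin n → ℂ := fun i => if (i : ℕ) < p then -1 else 1

lemma dfun_sq (p n : ℕ) (j : Fin n) : dfun p n j * dfun p n j = 1 := by
  unfold dfun; split <;> norm_num

lemma dfun_conj (p n : ℕ) (j : Fin n) : starRingEnd ℂ (dfun p n j) = dfun p n j := by
  unfold dfun; split <;> simp

lemma pqform_eq (p n : ℕ) (x y : Fin n → ℂ) :
    pqform p n x y = ∑ j, starRingEnd ℂ (x j) * (dfun p n j * y j) := by
  simp [pqform, sig, dfun, dotProduct, Matrix.mulVec_diagonal]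

lemma pqform_conj (p n : ℕ) (x y : Fin n → ℂ) :
    pqform p n y x = starRingEnd ℂ (pqform p n x y) := by
  rw [pqform_eq, pqform_eq, map_sum]
  refine Finset.sum_congr rfl fun j _ => ?_
  rw [_root_.map_mul, _root_.map_mul, dfun_conj, Complex.conj_conj]
  ring

lemma pqform_add_right (p n : ℕ) (x y z : Fin n → ℂ) :
    pqform p n x (y + z) = pqform p n x y + pqform p n x z := by
  simp only [pqform_eq, ← Finset.sum_add_distrib, Pi.add_apply]
  exact Finset.sum_congr rfl fun j _ => by ring

lemma pqform_add_left (p n : ℕ) (x y z : Fin n → ℂ) :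
    pqform p n (x + y) z = pqform p n x z + pqform p n y z := by
  simp only [pqform_eq, ← Finset.sum_add_distrib, Pi.add_apply, _root_.map_add]
  exact Finset.sum_congr rfl fun j _ => by ring

lemma sigvec_eq (p n : ℕ) (x : Fin n → ℂ) (j : Fin n) :
    (sig p n *ᵥ x) j = dfun p n j * x j := by
  simp [sig, dfun, Matrix.mulVec_diagonal]

theorem stmt_17 (p q n : ℕ) (hn : n = p + q) (hpq : p ≠ q)
    (V : Submodule ℂ (Fin n → ℂ))
    (hiso : ∀ x ∈ V, ∀ y ∈ V, pqform p n x y = 0)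
    (hmax : ∀ W : Submodule ℂ (Fin n → ℂ),
      V ≤ W → (∀ x ∈ W, ∀ y ∈ W, pqform p n x y = 0) → W = V)
    (u v w : Fin n → ℂ)
    (hw : w ∈ V)
    (hvperp : ∀ y ∈ V, pqform p n y v = 0) (hvnotV : v ∉ V)
    (hu : ¬ (∀ y ∈ V, pqform p n y u = 0))
    (huw_re : ((pqform p n u w).im = 0)) (huw_ne : pqform p n u w ≠ 0)
    (hrel : 2 * pqform p n u w + pqform p n v v = 0) :
    ∃ M : Matrix (Fin n) (Fin n) ℂ,
      M.rank = 1 ∧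
      (∀ x : Fin n → ℂ, M *ᵥ x ∈ V) ∧
      (∀ x ∈ V, M *ᵥ x = 0) ∧
      (∀ x ∈ V, M *ᵥ (sig p n *ᵥ x) = 0) ∧
      (1 / 2 : ℂ) • (((M - pqadj p n M) * (M - pqadj p n M)) *ᵥ u) +
          (M - pqadj p n M) *ᵥ v + w = 0 := by
  classical
  set t : ℂ := pqform p n u w with ht
  have htconj : starRingEnd ℂ t = t := Complex.conj_eq_iff_im.mpr huw_re
  -- orthogonal (standard) decomposition of v over V
  let e : EuclideanSpace ℂ (Fin n) ≃ₗ[ℂ] (Fin n → ℂ) := WithLp.linearEquiv 2 ℂ (Fin n → ℂ)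
  let K : Submodule ℂ (EuclideanSpace ℂ (Fin n)) := V.comap e.toLinearMap
  obtain ⟨y, hy, z, hz, hyz⟩ := K.exists_add_mem_mem_orthogonal (e.symm v)
  set a : Fin n → ℂ := e y with ha_def
  have ha : a ∈ V := hy
  set b : Fin n → ℂ := e z with hb_def
  have hvab : v = a + b := by
    have := congrArg e hyz
    simpa [map_add] using this
  -- standard orthogonality of b to V
  have hstd : ∀ x ∈ V, ∑ j, starRingEnd ℂ (x j) * b j = 0 := by
    intro x hx
    have hxK : e.symm x ∈ K := by
      simp only [K, Submodule.mem_comap, LinearEquiv.coe_toLinearMap]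
      simpa using hx
    have h0 : inner (𝕜 := ℂ) (e.symm x) z = 0 := hz _ hxK
    rw [PiLp.inner_apply] at h0
    simpa [RCLike.inner_apply, e, b, mul_comm] using h0
  -- pq-form facts
  have hVb : ∀ x ∈ V, pqform p n x b = 0 := by
    intro x hx
    have h1 : pqform p n x v = 0 := hvperp x hx
    have h2 : pqform p n x a = 0 := hiso x hx a ha
    rw [hvab, pqform_add_right, h2, zero_add] at h1
    exact h1
  have hbV : ∀ x ∈ V, pqform p n b x = 0 := by
    intro x hx
    rw [pqform_conj, hVb x hx, map_zero]
  have hbb : pqform p n b b = -2 * t := by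
    have hvv : pqform p n v v = -2 * t := by linear_combination hrel
    have : pqform p n v v = pqform p n b b := by
      rw [hvab, pqform_add_left, pqform_add_right, pqform_add_right,
        hiso a ha a ha, hVb a ha, hbV a ha]
      ring
    rw [← this, hvv]
  have hfv : pqform p n b v = -2 * t := by
    rw [hvab, pqform_add_right, hbV a ha, zero_add, hbb]
  -- the matrix
  set M : Matrix (Fin n) (Fin n) ℂ :=
    Matrix.of (fun i j => t⁻¹ * (w i * (starRingEnd ℂ (b j) * dfun p n j))) with hMdef
  have hM : ∀ x : Fin n → ℂ, M *ᵥ x = (t⁻¹ * pqform p n b x) • w := by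
    intro x
    funext i
    simp only [hMdef, Matrix.mulVec, dotProduct, Matrix.of_apply, Pi.smul_apply,
      smul_eq_mul, pqform_eq, Finset.mul_sum, Finset.sum_mul]
    exact Finset.sum_congr rfl fun j _ => by ring
  have hadj_entry : ∀ i j, (pqadj p n M) i j = t⁻¹ * (b i * (starRingEnd ℂ (w j) * dfun p n j)) := by
    intro i j
    have key : (pqadj p n M) i j = dfun p n i * (starRingEnd ℂ (M j i)) * dfun p n j := by
      unfold pqadj sig
      rw [Matrix.mul_diagonal, Matrix.diagonal_mul, Matrix.conjTranspose_apply]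
      rfl
    rw [key, hMdef, Matrix.of_apply, _root_.map_mul, _root_.map_mul, _root_.map_mul,
      map_inv₀, htconj, dfun_conj, Complex.conj_conj]
    have h2 := dfun_sq p n i
    linear_combination (t⁻¹ * starRingEnd ℂ (w j) * b i * dfun p n j) * h2
  have hMadj : ∀ x : Fin n → ℂ, (pqadj p n M) *ᵥ x = (t⁻¹ * pqform p n w x) • b := by
    intro x
    funext i
    simp only [Matrix.mulVec, dotProduct, hadj_entry, Pi.smul_apply, smul_eq_mul,
      pqform_eq, Finset.mul_sum, Finset.sum_mul]
    exact Finset.sum_congr rfl fun j _ => by ring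
  set N : Matrix (Fin n) (Fin n) ℂ := M - pqadj p n M with hNdef
  have hN : ∀ x : Fin n → ℂ,
      N *ᵥ x = (t⁻¹ * pqform p n b x) • w - (t⁻¹ * pqform p n w x) • b := by
    intro x
    rw [hNdef, Matrix.sub_mulVec, hM, hMadj]
  -- scalar values
  have hgv : pqform p n w v = 0 := hvperp w hw
  have hgw : pqform p n w w = 0 := hiso w hw w hw
  have hgb : pqform p n w b = 0 := hVb w hw
  have hfw : pqform p n b w = 0 := hbV w hw
  have hgu : pqform p n w u = t := by
    rw [pqform_conj, ← ht, htconj]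
  have hcoef : t⁻¹ * (-2 * t) = -2 := by
    field_simp
  have hNv : N *ᵥ v = (-2 : ℂ) • w := by
    rw [hN, hfv, hgv, hcoef]
    simp
  have hNw : N *ᵥ w = 0 := by
    rw [hN, hfw, hgw]
    simp
  have hNb : N *ᵥ b = (-2 : ℂ) • w := by
    rw [hN, hbb, hgb, hcoef]
    simp
  have hMv : M *ᵥ v = (-2 : ℂ) • w := by
    rw [hM, hfv, hcoef]
  have hwne : w ≠ 0 := by
    rintro rfl
    exact huw_ne (by rw [ht, pqform_eq]; simp)
  refine ⟨M, ?_, ?_, ?_, ?_, ?_⟩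
  · -- rank
    have hrange : LinearMap.range M.mulVecLin = ℂ ∙ w := by
      apply le_antisymm
      · rintro _ ⟨x, rfl⟩
        rw [Matrix.mulVecLin_apply, hM]
        exact Submodule.smul_mem _ _ (Submodule.mem_span_singleton_self w)
      · rw [Submodule.span_singleton_le_iff_mem]
        refine ⟨(-2 : ℂ)⁻¹ • v, ?_⟩
        rw [Matrix.mulVecLin_apply, Matrix.mulVec_smul, hMv, smul_smul]
        norm_num
    rw [Matrix.rank, hrange, finrank_span_singleton hwne]
  · intro x
    rw [hM]
    exact V.smul_mem _ hw
  · intro x hx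
    rw [hM, hbV x hx]
    simp
  · intro x hx
    have hbsig : pqform p n b (sig p n *ᵥ x) = 0 := by
      have : pqform p n b (sig p n *ᵥ x) = starRingEnd ℂ (∑ j, starRingEnd ℂ (x j) * b j) := by
        rw [pqform_eq, map_sum]
        refine Finset.sum_congr rfl fun j _ => ?_
        rw [sigvec_eq, _root_.map_mul, Complex.conj_conj]
        have := dfun_sq p n j
        linear_combination starRingEnd ℂ (b j) * x j * this
      rw [this, hstd x hx, map_zero]
    rw [hM, hbsig]
    simp
  · -- the main identity
    have hNN : ((M - pqadj p n M) * (M - pqadj p n M)) *ᵥ u = (2 : ℂ) • w := by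
      rw [← Matrix.mulVec_mulVec, ← hNdef, hN u]
      rw [Matrix.mulVec_sub, Matrix.mulVec_smul, Matrix.mulVec_smul, hNw, hNb]
      rw [smul_zero, zero_sub, smul_smul]
      rw [hgu]
      have : t⁻¹ * t = 1 := inv_mul_cancel₀ huw_ne
      rw [this]
      module
    rw [hNN, ← hNdef, hNv]
    module
end
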